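/- Let D be a positive, 1-periodic, C² function, let r ≡ r₀ be a constant function, and let q ∈ ℝ. If (k, ψ) is a principal eigenpair of L_q^0[r₀;D], then k = r₀. In particular, for constant growth rate the ability of persistence k_q^0[r₀;D] does not depend on q. -/

import Mathlib

open Real MeasureTheory Set Filter Topology

noncomputable section

/-- The operator `L_q^λ[r;D]` acting on C² functions `ψ`:
`(L_q^λ[r;D]ψ)(x) = D ψ'' + ((1+q)D' − 2λD) ψ' + (qD'' + λ²D − (1+q)λD' + r) ψ`. -/
def Lop (q lam : ℝ) (r D ψ : ℝ → ℝ) (x : ℝ) : ℝ :=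
  D x * deriv (deriv ψ) x + ((1 + q) * deriv D x - 2 * lam * D x) * deriv ψ x +
    (q * deriv (deriv D) x + lam ^ 2 * D x - (1 + q) * lam * deriv D x + r x) * ψ x

/-- `(k, ψ)` is a principal eigenpair of `L_q^λ[r;D]`: `ψ` is a positive, 1-periodic,
C² function with `L_q^λ[r;D]ψ = kψ`. -/
def IsEigenpair (q lam : ℝ) (r D : ℝ → ℝ) (k : ℝ) (ψ : ℝ → ℝ) : Prop :=
  ContDiff ℝ 2 ψ ∧ (∀ x, 0 < ψ x) ∧ Function.Periodic ψ 1 ∧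
    ∀ x, Lop q lam r D ψ x = k * ψ x

/-- The Freidlin–Gärtner infimum `inf_{λ>0} k(λ)/λ`, as an extended real number. -/
def speed (k : ℝ → ℝ) : EReal := ⨅ l : {l : ℝ // 0 < l}, ((k l.1 / l.1 : ℝ) : EReal)

lemma periodic_deriv' (f : ℝ → ℝ) (h : Function.Periodic f 1) :
    Function.Periodic (deriv f) 1 := fun x => by
  have hf : (fun y => f (y + 1)) = f := funext h
  calc deriv f (x + 1) = deriv (fun y => f (y + 1)) x := (deriv_comp_add_const f 1 x).symm
    _ = deriv f x := by rw [hf]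

/-- Theorem `monotonicity (i)`. For a constant growth rate `r₀`, the
principal eigenvalue of `L_q^0[r₀;D]` equals `r₀`, independently of `q`. -/
theorem stmt_15 (D : ℝ → ℝ) (hD : ContDiff ℝ 2 D) (hDpos : ∀ x, 0 < D x)
    (hDper : Function.Periodic D 1) (r₀ q k : ℝ) (ψ : ℝ → ℝ)
    (hψ : IsEigenpair q 0 (fun _ => r₀) D k ψ) :
    k = r₀ := by
  obtain ⟨hψc, hψpos, hψper, heq⟩ := hψ
  have h2 : ((2 : ℕ) : WithTop ℕ∞) = (1 : WithTop ℕ∞) + 1 := by norm_num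
  have hψ1 : Differentiable ℝ ψ := hψc.differentiable two_ne_zero
  have hψ'c : ContDiff ℝ 1 (deriv ψ) := (contDiff_succ_iff_deriv.mp (h2 ▸ hψc)).2.2
  have hψ'1 : Differentiable ℝ (deriv ψ) := hψ'c.differentiable one_ne_zero
  have hD1 : Differentiable ℝ D := hD.differentiable two_ne_zero
  have hD'c : ContDiff ℝ 1 (deriv D) := (contDiff_succ_iff_deriv.mp (h2 ▸ hD)).2.2
  have hD'1 : Differentiable ℝ (deriv D) := hD'c.differentiable one_ne_zero
  set g : ℝ → ℝ := fun x => D x * deriv ψ x + q * (deriv D x * ψ x) with hg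
  have hgd : ∀ x, HasDerivAt g
      (deriv D x * deriv ψ x + D x * deriv (deriv ψ) x +
        q * (deriv (deriv D) x * ψ x + deriv D x * deriv ψ x)) x := by
    intro x
    exact ((hD1 x).hasDerivAt.mul (hψ'1 x).hasDerivAt).add
      (((hD'1 x).hasDerivAt.mul (hψ1 x).hasDerivAt).const_mul q)
  have hgderiv : ∀ x, deriv g x = (k - r₀) * ψ x := by
    intro x
    rw [(hgd x).deriv]
    have h := heq x
    simp only [Lop] at h
    nlinarith [h]
  have hgdiff : ∀ x ∈ uIcc (0 : ℝ) 1, DifferentiableAt ℝ g x := fun x _ => (hgd x).differentiableAt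
  have hψcont : Continuous ψ := hψc.continuous
  have hint : IntervalIntegrable (deriv g) volume 0 1 := by
    have : Continuous (deriv g) := by
      have : deriv g = fun x => (k - r₀) * ψ x := funext hgderiv
      rw [this]; fun_prop
    exact this.intervalIntegrable 0 1
  have hsub : ∫ y in (0:ℝ)..1, deriv g y = g 1 - g 0 :=
    intervalIntegral.integral_deriv_eq_sub hgdiff hint
  have hg10 : g 1 = g 0 := by
    have h1 : ψ 1 = ψ 0 := by simpa using hψper 0
    have h2' : D 1 = D 0 := by simpa using hDper 0
    have h3 : deriv ψ 1 = deriv ψ 0 := by simpa using periodic_deriv' ψ hψper 0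
    have h4 : deriv D 1 = deriv D 0 := by simpa using periodic_deriv' D hDper 0
    simp only [hg, h1, h2', h3, h4]
  have hval : (k - r₀) * ∫ x in (0:ℝ)..1, ψ x = 0 := by
    rw [← intervalIntegral.integral_const_mul]
    calc ∫ x in (0:ℝ)..1, (k - r₀) * ψ x = ∫ y in (0:ℝ)..1, deriv g y := by
          congr 1; exact funext fun x => (hgderiv x).symm
      _ = g 1 - g 0 := hsub
      _ = 0 := by rw [hg10]; ring
  have hpos : 0 < ∫ x in (0:ℝ)..1, ψ x :=
    intervalIntegral.intervalIntegral_pos_of_pos (hψcont.intervalIntegrable 0 1) hψpos one_pos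
  have := mul_eq_zero.mp hval
  rcases this with h | h
  · linarith
  · exact absurd h (ne_of_gt hpos)
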